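/- Let (q̃0, q̃) be a unit quaternion, W_γ a symmetric 3×3 matrix, and R̂, R ∈ SO(3) with R(Q̃) = R R̂^T. Then ∑_{i=1}^n γ_i ‖R̂^T r_i - R^T r_i‖^2 = 4 q̃^T W_γ q̃, where W_γ = -∑ γ_i S(r_i)^2 and γ_i > 0. -/
import Mathlib


open Matrix

/-- The skew-symmetric (cross-product) matrix map `S : ℝ³ → so(3)`. -/
def skewS (x : Fin 3 → ℝ) : Matrix (Fin 3) (Fin 3) ℝ :=
  !![0, -x 2, x 1; x 2, 0, -x 0; -x 1, x 0, 0]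

/-- The Rodriguez rotation matrix associated to a quaternion `(q0, q)`. -/
def rod (q0 : ℝ) (q : Fin 3 → ℝ) : Matrix (Fin 3) (Fin 3) ℝ :=
  (q0 ^ 2 - q ⬝ᵥ q) • (1 : Matrix (Fin 3) (Fin 3) ℝ) +
    (2 : ℝ) • Matrix.vecMulVec q q + (2 * q0) • skewS q

lemma quad_eq (B : Matrix (Fin 3) (Fin 3) ℝ) (x : Fin 3 → ℝ) :
    (x ᵥ* B) ⬝ᵥ (x ᵥ* B) = (x ᵥ* (B * Bᵀ)) ⬝ᵥ x := by
  calc (x ᵥ* B) ⬝ᵥ (x ᵥ* B) = (x ᵥ* B) ⬝ᵥ (Bᵀ *ᵥ x) := by rw [mulVec_transpose]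
    _ = ((x ᵥ* B) ᵥ* Bᵀ) ⬝ᵥ x := dotProduct_mulVec _ _ _
    _ = (x ᵥ* (B * Bᵀ)) ⬝ᵥ x := by rw [vecMul_vecMul]

lemma skew_sq_symm (v : Fin 3 → ℝ) (x y : Fin 3) :
    (skewS v * skewS v) x y = (skewS v * skewS v) y x := by
  fin_cases x <;> fin_cases y <;>
    simp [skewS, Matrix.mul_apply, Fin.sum_univ_succ] <;> ring

lemma key (q0 : ℝ) (q : Fin 3 → ℝ) (hunit : q0 ^ 2 + q ⬝ᵥ q = 1)
    (R Rh : Matrix (Fin 3) (Fin 3) ℝ)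
    (hR : R * Rᵀ = 1) (hRh : Rh * Rhᵀ = 1)
    (hrel : rod q0 q = R * Rhᵀ) (r : Fin 3 → ℝ) :
    (Rhᵀ.mulVec r - Rᵀ.mulVec r) ⬝ᵥ (Rhᵀ.mulVec r - Rᵀ.mulVec r) =
      4 * (q ⬝ᵥ (-(skewS r * skewS r)).mulVec q) := by
  have hRhR : Rh * Rᵀ = (rod q0 q)ᵀ := by
    rw [hrel, transpose_mul, transpose_transpose]
  have hM : (Rh - R) * (Rh - R)ᵀ = (2:ℝ) • 1 - rod q0 q - (rod q0 q)ᵀ := by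
    rw [transpose_sub, sub_mul, mul_sub, mul_sub, hR, hRh, hRhR, hrel]
    simp [two_smul]
    abel
  have hd : Rhᵀ.mulVec r - Rᵀ.mulVec r = r ᵥ* (Rh - R) := by
    rw [← mulVec_transpose, transpose_sub, sub_mulVec]
  rw [hd, quad_eq, hM]
  have hu : q0 ^ 2 + (q 0 * q 0 + (q 1 * q 1 + q 2 * q 2)) = 1 := by
    simpa [dotProduct, Fin.sum_univ_succ] using hunit
  simp [rod, skewS, vecMul, mulVec, dotProduct, Matrix.mul_apply, vecMulVec_apply,
    Fin.sum_univ_succ, Matrix.one_apply, Matrix.sub_apply, Matrix.add_apply,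
    Matrix.smul_apply, Matrix.neg_apply, transpose_apply]
  ring_nf
  linear_combination (-2 * (r 0 ^ 2 + r 1 ^ 2 + r 2 ^ 2)) * hu

theorem stmt18 (n : ℕ) (r : Fin n → Fin 3 → ℝ) (γ : Fin n → ℝ) (hγ : ∀ i, 0 < γ i)
    (q0 : ℝ) (q : Fin 3 → ℝ) (hunit : q0 ^ 2 + q ⬝ᵥ q = 1)
    (R Rh : Matrix (Fin 3) (Fin 3) ℝ)
    (hR : R * Rᵀ = 1) (hRdet : R.det = 1) (hRh : Rh * Rhᵀ = 1) (hRhdet : Rh.det = 1)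
    (hrel : rod q0 q = R * Rhᵀ) :
    (∑ i, γ i * ((Rhᵀ.mulVec (r i) - Rᵀ.mulVec (r i)) ⬝ᵥ (Rhᵀ.mulVec (r i) - Rᵀ.mulVec (r i)))) =
      4 * (q ⬝ᵥ (-(∑ i, γ i • (skewS (r i) * skewS (r i)))).mulVec q) := by
  have hsum : q ⬝ᵥ (-(∑ i, γ i • (skewS (r i) * skewS (r i)))).mulVec q
      = ∑ i, γ i * (q ⬝ᵥ (-(skewS (r i) * skewS (r i))).mulVec q) := by
    simp only [neg_mulVec, dotProduct_neg, mulVec, dotProduct, Matrix.sum_apply,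
      Matrix.smul_apply, smul_eq_mul, Finset.mul_sum, Finset.sum_mul, Matrix.neg_apply,
      mul_neg, neg_mul, Finset.sum_neg_distrib]
    refine congrArg Neg.neg ?_
    rw [Finset.sum_comm]
    refine Eq.trans (Finset.sum_congr rfl fun a _ => Finset.sum_comm) ?_
    rw [Finset.sum_comm]
    refine Finset.sum_congr rfl fun i _ => Finset.sum_congr rfl fun x _ =>
      Finset.sum_congr rfl fun y _ => ?_
    rw [skew_sq_symm]
    ring
  rw [hsum, Finset.mul_sum]
  refine Finset.sum_congr rfl fun i _ => ?_
  rw [key q0 q hunit R Rh hR hRh hrel (r i)]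
  ring
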